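/- arXiv:2003.02158 — 2 statements merged into one kernel-verified Lean document; each statement's English description precedes it below -/
import Mathlib

section
/- Let Y be an adapted process with Y_0 = 1 and let 𝒳 be a family of nonnegative adapted processes such that for each X ∈ 𝒳, X·Y is a supermartingale with X_0 Y_0 = 1, and {Y_t = 0} ⊆ {X_t = 0} a.s. for all t and all X ∈ 𝒳. Then for each fixed t ∈ [0,∞), the family { X_t : X ∈ 𝒳 } is bounded in L⁰, i.e. sup_{X∈𝒳} P[ X_t > M ] → 0 as M → ∞. -/
open MeasureTheory Filter Set
open scoped NNReal ENNReal Topology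

theorem boundedInL0_of_deflator
    {Ω : Type*} {m0 : MeasurableSpace Ω} (μ : Measure Ω) [IsProbabilityMeasure μ]
    (ℱ : Filtration ℝ≥0 m0) (Y : ℝ≥0 → Ω → ℝ)
    (hYadapted : Adapted ℱ Y) (hY0 : ∀ ω, Y 0 ω = 1) (hYpos : ∀ t, 0 ≤ᵐ[μ] Y t)
    (𝒳 : Set (ℝ≥0 → Ω → ℝ))
    (hXadapted : ∀ X ∈ 𝒳, Adapted ℱ X)
    (hXpos : ∀ X ∈ 𝒳, ∀ t ω, 0 ≤ X t ω)
    (hsup : ∀ X ∈ 𝒳, Supermartingale (fun t ω => X t ω * Y t ω) ℱ μ)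
    (hone : ∀ X ∈ 𝒳, ∀ᵐ ω ∂μ, X 0 ω * Y 0 ω = 1)
    (hzero : ∀ X ∈ 𝒳, ∀ t, ∀ᵐ ω ∂μ, Y t ω = 0 → X t ω = 0) :
    ∀ t : ℝ≥0, Tendsto (fun M : ℝ => ⨆ X ∈ 𝒳, μ {ω | M < X t ω}) atTop (𝓝 0) := by
  intro t
  rw [ENNReal.tendsto_nhds_zero]
  intro ε hε
  -- measurability of Y t
  have hYmeas : Measurable (Y t) :=
    (hYadapted t).mono (ℱ.le t) le_rfl
  -- the shrinking sets {0 < Y t ≤ 1/(n+1)}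
  set A : ℕ → Set Ω := fun n => {ω | Y t ω ∈ Ioc (0 : ℝ) ((n + 1 : ℝ)⁻¹)} with hA
  have hAmeas : ∀ n, MeasurableSet (A n) := fun n => hYmeas measurableSet_Ioc
  have hAanti : Antitone A := by
    intro n m hnm ω hω
    refine ⟨hω.1, le_trans hω.2 ?_⟩
    apply inv_anti₀ (by positivity)
    exact_mod_cast by exact_mod_cast Nat.add_le_add_right hnm 1
  have hAempty : (⋂ n, A n) = ∅ := by
    ext ω
    simp only [mem_iInter, mem_empty_iff_false, iff_false]
    intro h
    obtain ⟨n, hn⟩ := exists_nat_gt (Y t ω)⁻¹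
    have h0 : 0 < Y t ω := (h 0).1
    have hle := (h n).2
    have key : (1 : ℝ) < Y t ω * n := by
      have h3 := mul_lt_mul_of_pos_left hn h0
      rwa [mul_inv_cancel₀ (ne_of_gt h0)] at h3
    have h2 := mul_le_mul_of_nonneg_right hle (by positivity : (0:ℝ) ≤ (n:ℝ) + 1)
    rw [inv_mul_cancel₀ (by positivity)] at h2
    nlinarith
  have htend : Tendsto (μ ∘ A) atTop (𝓝 0) := by
    have := tendsto_measure_iInter_atTop (μ := μ)
      (fun n => (hAmeas n).nullMeasurableSet) hAanti ⟨0, measure_ne_top μ _⟩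
    rwa [hAempty, measure_empty] at this
  have hε2 : (0 : ℝ≥0∞) < ε / 2 := ENNReal.half_pos hε.ne'
  obtain ⟨N, hN⟩ := (ENNReal.tendsto_atTop_zero.mp htend) (ε / 2) hε2
  set δ : ℝ := ((N : ℝ) + 1)⁻¹ with hδ
  have hδpos : 0 < δ := by positivity
  -- pick η > 0 with ofReal η ≤ ε/2
  obtain ⟨η, hηpos, hη⟩ : ∃ η : ℝ, 0 < η ∧ ENNReal.ofReal η ≤ ε / 2 := by
    rcases eq_or_ne (ε / 2) ∞ with h | h
    · exact ⟨1, one_pos, by simp [h]⟩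
    · exact ⟨(ε / 2).toReal, ENNReal.toReal_pos hε2.ne' h, by
        rw [ENNReal.ofReal_toReal h]⟩
  filter_upwards [eventually_ge_atTop (max 0 (1 / (η * δ)))] with M hM
  have hM0 : 0 ≤ M := le_trans (le_max_left _ _) hM
  refine iSup₂_le fun X hX => ?_
  -- key pointwise a.e. inclusion
  set B : Set Ω := {ω | M * δ ≤ X t ω * Y t ω} ∪ A N with hB
  have hincl : ({ω | M < X t ω} : Set Ω) ≤ᵐ[μ] B := by
    filter_upwards [hYpos t, hzero X hX t] with ω hY0' hz hMω
    simp only [hB, mem_union, mem_setOf_eq, hA, mem_Ioc]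
    by_cases hYz : Y t ω = 0
    · exfalso
      have hlt : M < X t ω := hMω
      rw [hz hYz] at hlt
      linarith
    · have hYpos' : 0 < Y t ω := lt_of_le_of_ne hY0' (Ne.symm hYz)
      by_cases hYδ : Y t ω ≤ δ
      · exact Or.inr ⟨hYpos', hYδ⟩
      · push_neg at hYδ
        refine Or.inl ?_
        simp only [mem_setOf_eq] at hMω ⊢
        exact mul_le_mul hMω.le hYδ.le hδpos.le (hM0.trans hMω.le)
  -- Markov: the integral of X t * Y t is at most 1
  have hint : ∫ ω, X t ω * Y t ω ∂μ ≤ 1 := by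
    have h1 : ∫ ω, X t ω * Y t ω ∂μ ≤ ∫ ω, X 0 ω * Y 0 ω ∂μ := by
      have := (hsup X hX).setIntegral_le (by positivity : (0:ℝ≥0) ≤ t) (MeasurableSet.univ (α := Ω))
      simpa [setIntegral_univ] using this
    have h2 : ∫ ω, X 0 ω * Y 0 ω ∂μ = 1 := by
      rw [integral_congr_ae (hone X hX)]
      simp
    linarith
  have hnonneg : 0 ≤ᵐ[μ] fun ω => X t ω * Y t ω := by
    filter_upwards [hYpos t] with ω hY' using mul_nonneg (hXpos X hX t ω) hY'
  have hmarkov : μ {ω | M * δ ≤ X t ω * Y t ω} ≤ ENNReal.ofReal η := by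
    have := mul_meas_ge_le_integral_of_nonneg hnonneg ((hsup X hX).integrable t) (M * δ)
    have hMδpos : 0 < M * δ := by
      have : 1 / (η * δ) ≤ M := le_trans (le_max_right _ _) hM
      have hηδ : 0 < η * δ := mul_pos hηpos hδpos
      have : 0 < M := lt_of_lt_of_le (by positivity) this
      positivity
    have htoReal : (μ {ω | M * δ ≤ X t ω * Y t ω}).toReal ≤ 1 / (M * δ) := by
      rw [le_div_iff₀ hMδpos, mul_comm]
      exact le_trans this hint
    have hfin : μ {ω | M * δ ≤ X t ω * Y t ω} ≠ ∞ := measure_ne_top μ _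
    calc μ {ω | M * δ ≤ X t ω * Y t ω}
        = ENNReal.ofReal (μ {ω | M * δ ≤ X t ω * Y t ω}).toReal := by
          rw [ENNReal.ofReal_toReal hfin]
      _ ≤ ENNReal.ofReal (1 / (M * δ)) := ENNReal.ofReal_le_ofReal htoReal
      _ ≤ ENNReal.ofReal η := by
          apply ENNReal.ofReal_le_ofReal
          rw [div_le_iff₀ hMδpos]
          have h1 : 1 / (η * δ) ≤ M := le_trans (le_max_right _ _) hM
          have hηδ : 0 < η * δ := mul_pos hηpos hδpos
          rw [div_le_iff₀ hηδ] at h1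
          nlinarith
  calc μ {ω | M < X t ω}
      ≤ μ B := measure_mono_ae hincl
    _ ≤ μ {ω | M * δ ≤ X t ω * Y t ω} + μ (A N) := hB ▸ measure_union_le _ _
    _ ≤ ε / 2 + ε / 2 := add_le_add (hmarkov.trans hη) (hN N le_rfl)
    _ = ε := ENNReal.add_halves ε
end

section
/- Let Y be a nonnegative supermartingale on [0,∞) and X a nonnegative process such that X·Y is a right-continuous supermartingale with X_0 Y_0 = 1. Suppose for some δ > 0 and every N ∈ ℕ there exists such a process X^N with P[ liminf_{t→∞} X^N_t Y_t > N ] > δ. Then for N > 1/δ this yields a contradiction; hence the family { liminf_{t→∞} X_t Y_t : X such that XY is a supermartingale with X_0 Y_0 = 1, XY right-continuous, X, Y ≥ 0 } is bounded in L⁰. -/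
open MeasureTheory Filter Set
open scoped NNReal ENNReal Topology

theorem no_unbounded_liminf_profit
    {Ω : Type*} {m0 : MeasurableSpace Ω} (μ : Measure Ω) [IsProbabilityMeasure μ]
    (ℱ : Filtration ℝ≥0 m0) (Y : ℝ≥0 → Ω → ℝ)
    (hY : Supermartingale Y ℱ μ) (hYpos : ∀ t ω, 0 ≤ Y t ω) :
    ¬ ∃ δ : ℝ, 0 < δ ∧ ∀ N : ℕ, ∃ X : ℝ≥0 → Ω → ℝ,
      (∀ t ω, 0 ≤ X t ω) ∧
      (∀ ω (t : ℝ≥0), ContinuousWithinAt (fun s => X s ω * Y s ω) (Ici t) t) ∧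
      Supermartingale (fun t ω => X t ω * Y t ω) ℱ μ ∧
      (∀ ω, X 0 ω * Y 0 ω = 1) ∧
      ENNReal.ofReal δ <
        μ {ω | (N : ℝ≥0∞) < liminf (fun t : ℝ≥0 => ENNReal.ofReal (X t ω * Y t ω)) atTop} := by
  rintro ⟨δ, hδ, h⟩
  set N : ℕ := ⌈δ⁻¹⌉₊ + 1 with hN
  obtain ⟨X, hXpos, _, hZsm, hZ0, hμ⟩ := h N
  set Z : ℝ≥0 → Ω → ℝ := fun t ω => X t ω * Y t ω with hZdef
  have hZpos : ∀ t ω, 0 ≤ Z t ω := fun t ω => mul_nonneg (hXpos t ω) (hYpos t ω)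
  -- expectation bound: ∫⁻ ofReal (Z t) ≤ 1
  have hexp : ∀ t : ℝ≥0, (∫⁻ ω, ENNReal.ofReal (Z t ω) ∂μ) ≤ 1 := by
    intro t
    have hle : ∫ ω, Z t ω ∂μ ≤ ∫ ω, Z 0 ω ∂μ := by
      have := hZsm.setIntegral_le (zero_le : (0 : ℝ≥0) ≤ t) (MeasurableSet.univ (α := Ω))
      simpa [Measure.restrict_univ] using this
    have h0 : ∫ ω, Z 0 ω ∂μ = 1 := by
      simp [hZdef, hZ0]
    rw [← ofReal_integral_eq_lintegral_ofReal (hZsm.integrable t)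
      (Filter.Eventually.of_forall (hZpos t))]
    calc ENNReal.ofReal (∫ ω, Z t ω ∂μ) ≤ ENNReal.ofReal 1 :=
          ENNReal.ofReal_le_ofReal (h0 ▸ hle)
      _ = 1 := ENNReal.ofReal_one
  -- the liminf along ℕ
  set g : Ω → ℝ≥0∞ := fun ω => liminf (fun n : ℕ => ENNReal.ofReal (Z n ω)) atTop with hg
  have hgmeas : Measurable g := by
    apply Measurable.liminf
    intro n
    exact ENNReal.measurable_ofReal.comp
      ((hZsm.stronglyMeasurable n).measurable.mono (ℱ.le n) le_rfl)
  have hgint : (∫⁻ ω, g ω ∂μ) ≤ 1 := by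
    calc (∫⁻ ω, g ω ∂μ) ≤ liminf (fun n : ℕ => ∫⁻ ω, ENNReal.ofReal (Z n ω) ∂μ) atTop :=
          lintegral_liminf_le fun n => ENNReal.measurable_ofReal.comp
            ((hZsm.stronglyMeasurable n).measurable.mono (ℱ.le n) le_rfl)
      _ ≤ 1 := by
          exact Filter.liminf_le_of_frequently_le'
            (Filter.Frequently.of_forall fun n => hexp n)
  -- liminf over ℝ≥0 is ≤ liminf over ℕ
  have hlim : ∀ ω, liminf (fun t : ℝ≥0 => ENNReal.ofReal (Z t ω)) atTop ≤ g ω := by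
    intro ω
    have hmap : (Filter.map ((↑) : ℕ → ℝ≥0) atTop) ≤ atTop :=
      tendsto_natCast_atTop_atTop
    calc liminf (fun t : ℝ≥0 => ENNReal.ofReal (Z t ω)) atTop
        ≤ liminf (fun t : ℝ≥0 => ENNReal.ofReal (Z t ω)) (Filter.map ((↑) : ℕ → ℝ≥0) atTop) :=
          liminf_le_liminf_of_le hmap
      _ = g ω := (Filter.liminf_comp _ _ _).symm
  -- Markov
  have hsub : {ω | (N : ℝ≥0∞) < liminf (fun t : ℝ≥0 => ENNReal.ofReal (Z t ω)) atTop}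
      ⊆ {ω | (N : ℝ≥0∞) ≤ g ω} := fun ω hω => le_trans (le_of_lt hω) (hlim ω)
  have hmarkov : μ {ω | (N : ℝ≥0∞) ≤ g ω} ≤ 1 / N := by
    calc μ {ω | (N : ℝ≥0∞) ≤ g ω} ≤ (∫⁻ ω, g ω ∂μ) / N :=
          meas_ge_le_lintegral_div hgmeas.aemeasurable
            (by simp [hN]) (by simp)
      _ ≤ 1 / N := by gcongr
  have hNδ : (1 : ℝ≥0∞) / N < ENNReal.ofReal δ := by
    rw [ENNReal.div_lt_iff (by simp [hN]) (by simp)]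
    rw [← ENNReal.ofReal_natCast, ← ENNReal.ofReal_mul hδ.le]
    rw [show (1 : ℝ≥0∞) = ENNReal.ofReal 1 by simp]
    rw [ENNReal.ofReal_lt_ofReal_iff (by positivity)]
    calc (1 : ℝ) = δ * δ⁻¹ := by field_simp
      _ < δ * N := by
          apply mul_lt_mul_of_pos_left _ hδ
          calc (δ⁻¹ : ℝ) ≤ ⌈δ⁻¹⌉₊ := Nat.le_ceil _
            _ < N := by exact_mod_cast Nat.lt_succ_self _
  have : ENNReal.ofReal δ < ENNReal.ofReal δ :=
    hμ.trans_le ((μ.mono hsub).trans (hmarkov.trans hNδ.le))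
  exact lt_irrefl _ this
end
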